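/- arXiv:1911.12945 — 4 statements merged into one kernel-verified Lean document; each statement's English description precedes it below -/
import Mathlib

section
/- For every u ∈ S_s and every v ∈ V_f, one has ‖u − v‖² = ‖u − x̄‖² + ‖x̄ − v‖², where x̄ is the orthogonal projection of x onto V_f. Consequently, x_s (= x̄) is the element of V_f closest to any given element of S_s. -/
open scoped RealInnerProductSpace

/-- Pythagorean identity: for `u ∈ S_s` and `v ∈ V_f`,
`‖u - v‖² = ‖u - x̄‖² + ‖x̄ - v‖²` where `x̄` is the orthogonal projection of `x` on `V_f`;
consequently `x̄` is the element of `V_f` closest to any given element of `S_s`. -/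
theorem pythagorean_identity_and_closest
    {B : Type*} [NormedAddCommGroup B] [InnerProductSpace ℝ B] [CompleteSpace B]
    {Z : Type*} (f : Z → B) (x : B) (s : Z → ℝ) (hs : ∀ i, s i = ⟪f i, x⟫) :
    (∀ u : B, (∀ i, ⟪f i, u⟫ = s i) →
      ∀ v ∈ (Submodule.span ℝ (Set.range f)).topologicalClosure,
        ‖u - v‖ ^ 2 =
          ‖u - (Submodule.orthogonalProjectionOnto (Submodule.span ℝ (Set.range f)).topologicalClosure x : B)‖ ^ 2
          + ‖(Submodule.orthogonalProjectionOnto (Submodule.span ℝ (Set.range f)).topologicalClosure x : B) - v‖ ^ 2)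
    ∧ (∀ u : B, (∀ i, ⟪f i, u⟫ = s i) →
        ∀ v ∈ (Submodule.span ℝ (Set.range f)).topologicalClosure,
          ‖u - (Submodule.orthogonalProjectionOnto (Submodule.span ℝ (Set.range f)).topologicalClosure x : B)‖
            ≤ ‖u - v‖) := by
  set K := Submodule.span ℝ (Set.range f)
  set V := K.topologicalClosure with hV
  set xb : B := (Submodule.orthogonalProjectionOnto V x : B)
  have hVK : Vᗮ = Kᗮ := by
    rw [hV, ← K.orthogonal_orthogonal_eq_closure, Submodule.triorthogonal_eq_orthogonal]
  have key : ∀ u : B, (∀ i, ⟪f i, u⟫ = s i) → ∀ v ∈ V,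
      ‖u - v‖ ^ 2 = ‖u - xb‖ ^ 2 + ‖xb - v‖ ^ 2 := by
    intro u hu v hv
    have hux : u - x ∈ Vᗮ := by
      rw [hVK, Submodule.mem_orthogonal]
      intro w hw
      induction hw using Submodule.span_induction with
      | mem w hw =>
        obtain ⟨i, rfl⟩ := hw
        rw [inner_sub_right, hu i, hs i, sub_self]
      | zero => simp
      | add a b _ _ ha hb => rw [inner_add_left, ha, hb, add_zero]
      | smul c a _ ha => rw [inner_smul_left, ha, mul_zero]
    have hxxb : x - xb ∈ Vᗮ := V.sub_starProjection_mem_orthogonal x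
    have huxb : u - xb ∈ Vᗮ := by
      have := Vᗮ.add_mem hux hxxb
      simpa [sub_add_sub_cancel] using this
    have hxbv : xb - v ∈ V := V.sub_mem (Submodule.orthogonalProjectionOnto V x).2 hv
    have hinner : ⟪u - xb, xb - v⟫ = 0 :=
      Submodule.inner_left_of_mem_orthogonal hxbv huxb
    have : u - v = (u - xb) + (xb - v) := by abel
    rw [this, norm_add_sq_real, hinner]
    ring
  refine ⟨key, fun u hu v hv => ?_⟩
  have h := key u hu v hv
  have h1 : ‖u - xb‖ ^ 2 ≤ ‖u - v‖ ^ 2 := by nlinarith [sq_nonneg ‖xb - v‖]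
  nlinarith [norm_nonneg (u - xb), norm_nonneg (u - v)]
end

section
/- Theorem (strict contraction on V_f): with M^λ u := u − Σ_{i∈Z} λ_i ⟨π_i, u⟩ f_i/‖π_i‖², where f_i = P_B π_i, and λ_i ∈ (0,2) for all i, one has ‖M^λ u‖ < ‖u‖ for every nonzero u ∈ V_f, the closed span of (f_i) in B. -/
open scoped RealInnerProductSpace
open Finset

/-- Strict contraction on `V_f`: with `f i = P_K (π i)` for an orthogonal family `(π i)` of
nonzero vectors, and `M^λ u = u − ∑ i λ i ⟪π i, u⟫ f i / ‖π i‖²` with `λ i ∈ (0,2)`,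
one has `‖M^λ u‖ < ‖u‖` for every nonzero `u` in the span `V_f` of the `f i`
(finite index set `Z`). -/
theorem relaxed_pocs_strict_contraction
    {H : Type*} [NormedAddCommGroup H] [InnerProductSpace ℝ H] [CompleteSpace H]
    {Z : Type*} [Fintype Z] (K : Submodule ℝ H) [CompleteSpace K]
    (π : Z → H) (hπ0 : ∀ i, π i ≠ 0)
    (hortho : ∀ i j, i ≠ j → ⟪π i, π j⟫ = 0)
    (f : Z → H) (hf : ∀ i, f i = (Submodule.orthogonalProjectionOnto K (π i) : H))
    (l : Z → ℝ) (hl : ∀ i, l i ∈ Set.Ioo (0 : ℝ) 2) :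
    ∀ u ∈ Submodule.span ℝ (Set.range f), u ≠ 0 →
      ‖u - ∑ i, (l i * ⟪π i, u⟫ / ‖π i‖ ^ 2) • f i‖ < ‖u‖ := by
  intro u hu hu0
  classical
  have hfK : ∀ i, f i ∈ K := fun i => by rw [hf]; exact (Submodule.orthogonalProjectionOnto K (π i)).2
  have huK : u ∈ K := by
    refine Submodule.span_le.mpr ?_ hu
    rintro _ ⟨i, rfl⟩; exact hfK i
  set c : Z → ℝ := fun i => l i * ⟪π i, u⟫ / ‖π i‖ ^ 2 with hc
  have hPu : (Submodule.orthogonalProjectionOnto K u : H) = u := by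
    rw [← Submodule.starProjection_apply]; exact Submodule.starProjection_eq_self_iff.mpr huK
  have hinner : ∀ i, ⟪f i, u⟫ = ⟪π i, u⟫ := by
    intro i
    rw [hf, ← Submodule.starProjection_apply, Submodule.inner_starProjection_left_eq_right,
      Submodule.starProjection_apply, hPu]
  -- some coefficient is nonzero
  have hex : ∃ i, ⟪π i, u⟫ ≠ 0 := by
    by_contra h
    push_neg at h
    have hzero : ∀ w ∈ Submodule.span ℝ (Set.range f), ⟪w, u⟫ = 0 := by
      intro w hw
      induction hw using Submodule.span_induction with
      | mem x hx =>
        obtain ⟨i, rfl⟩ := hx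
        rw [hinner]; exact h i
      | zero => simp
      | add x y _ _ hx hy => rw [inner_add_left, hx, hy]; ring
      | smul a x _ hx => rw [real_inner_smul_left, hx]; ring
    exact hu0 (inner_self_eq_zero.mp (hzero u hu))
  -- rewrite M u as projection of u - ∑ c i • π i
  have hM : u - ∑ i, c i • f i = (Submodule.orthogonalProjectionOnto K (u - ∑ i, c i • π i) : H) := by
    rw [map_sub, map_sum]
    push_cast
    rw [hPu]
    congr 1
    refine Finset.sum_congr rfl fun i _ => ?_
    rw [map_smul]
    push_cast
    rw [← hf]
  have hle : ‖u - ∑ i, c i • f i‖ ≤ ‖u - ∑ i, c i • π i‖ := by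
    rw [hM]
    calc ‖(Submodule.orthogonalProjectionOnto K (u - ∑ i, c i • π i) : H)‖
        ≤ ‖Submodule.orthogonalProjectionOnto K‖ * ‖u - ∑ i, c i • π i‖ :=
          (Submodule.orthogonalProjectionOnto K).le_opNorm _
      _ ≤ 1 * ‖u - ∑ i, c i • π i‖ := by
          gcongr; exact Submodule.orthogonalProjectionOnto_norm_le K
      _ = ‖u - ∑ i, c i • π i‖ := one_mul _
  -- norm computation
  have hns : ‖∑ i, c i • π i‖ ^ 2 = ∑ i, c i ^ 2 * ‖π i‖ ^ 2 := by
    rw [← real_inner_self_eq_norm_sq, sum_inner]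
    refine Finset.sum_congr rfl fun i _ => ?_
    rw [real_inner_smul_left, inner_sum, Finset.sum_eq_single i]
    · rw [real_inner_smul_right, real_inner_self_eq_norm_sq]; ring
    · intro j _ hj
      rw [real_inner_smul_right, hortho i j (fun h => hj h.symm)]; ring
    · simp
  have hcross : ⟪u, ∑ i, c i • π i⟫ = ∑ i, c i * ⟪π i, u⟫ := by
    rw [inner_sum]
    refine Finset.sum_congr rfl fun i _ => ?_
    rw [real_inner_smul_right, real_inner_comm]
  have hterm : ∀ i, 2 * (c i * ⟪π i, u⟫) - c i ^ 2 * ‖π i‖ ^ 2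
      = l i * (2 - l i) * ⟪π i, u⟫ ^ 2 / ‖π i‖ ^ 2 := by
    intro i
    have hn : ‖π i‖ ≠ 0 := norm_ne_zero_iff.mpr (hπ0 i)
    simp only [hc]
    field_simp
  have hnormv : ‖u - ∑ i, c i • π i‖ ^ 2
      = ‖u‖ ^ 2 - ∑ i, l i * (2 - l i) * ⟪π i, u⟫ ^ 2 / ‖π i‖ ^ 2 := by
    have h1 : ∑ i, l i * (2 - l i) * ⟪π i, u⟫ ^ 2 / ‖π i‖ ^ 2
        = ∑ i, (2 * (c i * ⟪π i, u⟫) - c i ^ 2 * ‖π i‖ ^ 2) :=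
      Finset.sum_congr rfl fun i _ => (hterm i).symm
    rw [norm_sub_sq_real, hns, hcross, h1, Finset.sum_sub_distrib, ← Finset.mul_sum]
    ring
  have hD : 0 < ∑ i, l i * (2 - l i) * ⟪π i, u⟫ ^ 2 / ‖π i‖ ^ 2 := by
    obtain ⟨i0, hi0⟩ := hex
    refine Finset.sum_pos' (fun i _ => ?_) ⟨i0, Finset.mem_univ i0, ?_⟩
    · have h1 : 0 ≤ l i * (2 - l i) :=
        mul_nonneg (hl i).1.le (by linarith [(hl i).2])
      positivity
    · have h1 : 0 < l i0 * (2 - l i0) :=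
        mul_pos (hl i0).1 (by linarith [(hl i0).2])
      have h2 : 0 < ‖π i0‖ ^ 2 := pow_pos (norm_pos_iff.mpr (hπ0 i0)) 2
      have h3 : 0 < ⟪π i0, u⟫ ^ 2 := pow_two_pos_of_ne_zero hi0
      exact div_pos (mul_pos h1 h3) h2
  have hlt : ‖u - ∑ i, c i • π i‖ < ‖u‖ := by
    have hsq : ‖u - ∑ i, c i • π i‖ ^ 2 < ‖u‖ ^ 2 := by
      rw [hnormv]; linarith
    exact lt_of_pow_lt_pow_left₀ 2 (norm_nonneg u) hsq
  exact lt_of_le_of_lt hle hlt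
end

section
/- Inner-product formula via a repeated integral: with f_i = φ * 1_{[t_{i−1}, t_i)} for a given integrable even-autocorrelation kernel, one has ⟨f_i, f_j⟩ = h(t_i − t_{j−1}) − h(t_{i−1} − t_{j−1}) − h(t_i − t_j) + h(t_{i−1} − t_j), where h(t) = ∫₀ᵗ (t − τ) a_φ(τ) dτ and a_φ(t) = (φ * φ(−·))(t). -/
open MeasureTheory intervalIntegral

private lemma finres (a b : ℝ) : IsFiniteMeasure ((volume : Measure ℝ).restrict (Set.Ioc a b)) := by
  constructor
  rw [Measure.restrict_apply_univ, Real.volume_Ioc]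
  exact ENNReal.ofReal_lt_top

private lemma bdd_intervalIntegrable {g : ℝ → ℝ} (hm : AEStronglyMeasurable g volume)
    {C : ℝ} (hb : ∀ x, |g x| ≤ C) (a b : ℝ) : IntervalIntegrable g volume a b := by
  constructor <;>
  · haveI := finres a b
    haveI := finres b a
    exact Integrable.mono' (integrable_const C) hm.restrict
      (Filter.Eventually.of_forall fun x => by simpa [Real.norm_eq_abs] using hb x)

private lemma cauchy_nonneg {g : ℝ → ℝ} (hm : AEStronglyMeasurable g volume)
    {C : ℝ} (hb : ∀ x, |g x| ≤ C) {z : ℝ} (hz : 0 ≤ z) :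
    ∫ y in (0:ℝ)..z, (∫ x in (0:ℝ)..y, g x) = ∫ τ in (0:ℝ)..z, (z - τ) * g τ := by
  have hC0 : 0 ≤ C := le_trans (abs_nonneg _) (hb 0)
  set S : Set ℝ := Set.Ioc (0:ℝ) z with hS
  have hSm : MeasurableSet S := measurableSet_Ioc
  haveI : IsFiniteMeasure (volume.restrict S) := finres 0 z
  rw [intervalIntegral.integral_of_le hz, intervalIntegral.integral_of_le hz]
  have hqmp : Measure.QuasiMeasurePreserving (Prod.snd : ℝ × ℝ → ℝ)
      ((volume.restrict S).prod (volume.restrict S)) (volume.restrict S) :=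
    Measure.quasiMeasurePreserving_snd
  have hA : MeasurableSet {p : ℝ × ℝ | 0 < p.2 ∧ p.2 ≤ p.1} :=
    (measurableSet_lt measurable_const measurable_snd).inter
      (measurableSet_le measurable_snd measurable_fst)
  have hFm : AEStronglyMeasurable
      (fun p : ℝ × ℝ => (Set.Ioc (0:ℝ) p.1).indicator g p.2)
      ((volume.restrict S).prod (volume.restrict S)) := by
    have : (fun p : ℝ × ℝ => (Set.Ioc (0:ℝ) p.1).indicator g p.2)
        = {p : ℝ × ℝ | 0 < p.2 ∧ p.2 ≤ p.1}.indicator (fun p => g p.2) := by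
      funext p
      simp [Set.indicator_apply, Set.mem_Ioc]
    rw [this]
    exact AEStronglyMeasurable.indicator
      (hm.restrict.comp_quasiMeasurePreserving hqmp) hA
  have hFint : Integrable (fun p : ℝ × ℝ => (Set.Ioc (0:ℝ) p.1).indicator g p.2)
      ((volume.restrict S).prod (volume.restrict S)) := by
    refine Integrable.mono' (integrable_const C) hFm (Filter.Eventually.of_forall fun p => ?_)
    rw [Real.norm_eq_abs]
    by_cases hp : p.2 ∈ Set.Ioc (0:ℝ) p.1
    · simpa [Set.indicator_of_mem hp] using hb p.2
    · simp [Set.indicator_of_notMem hp, hC0]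
  have step1 : ∫ y in S, (∫ x in (0:ℝ)..y, g x)
      = ∫ y in S, (∫ x in S, (Set.Ioc (0:ℝ) y).indicator g x) := by
    refine setIntegral_congr_fun hSm (fun y hy => ?_)
    rw [intervalIntegral.integral_of_le (le_of_lt hy.1),
      setIntegral_indicator measurableSet_Ioc]
    congr 1
    rw [hS, Set.Ioc_inter_Ioc]
    simp [min_eq_right hy.2, max_self]
  rw [step1, integral_integral_swap hFint]
  refine setIntegral_congr_fun hSm (fun x hx => ?_)
  have e1 : ∀ y : ℝ, (Set.Ioc (0:ℝ) y).indicator g x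
      = (Set.Ici x).indicator (fun _ => g x) y := by
    intro y
    by_cases hxy : x ≤ y
    · simp [Set.indicator_apply, Set.mem_Ioc, Set.mem_Ici, hxy, hx.1]
    · simp [Set.indicator_apply, Set.mem_Ioc, Set.mem_Ici, hxy]
  calc ∫ y in S, (Set.Ioc (0:ℝ) y).indicator g x
      = ∫ y in S, (Set.Ici x).indicator (fun _ => g x) y := by simp_rw [e1]
    _ = ∫ _ in S ∩ Set.Ici x, g x := setIntegral_indicator measurableSet_Ici
    _ = (z - x) * g x := by
        rw [setIntegral_const]
        have : S ∩ Set.Ici x = Set.Icc x z := by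
          ext y
          simp only [hS, Set.mem_inter_iff, Set.mem_Ioc, Set.mem_Ici, Set.mem_Icc]
          constructor
          · rintro ⟨⟨_, h2⟩, h3⟩; exact ⟨h3, h2⟩
          · rintro ⟨h1, h2⟩; exact ⟨⟨lt_of_lt_of_le hx.1 h1, h2⟩, h1⟩
        rw [this, Real.volume_real_Icc, max_eq_left (by linarith [hx.2] : (0:ℝ) ≤ z - x)]
        simp [smul_eq_mul]

private lemma cauchy_all {g : ℝ → ℝ} (hm : AEStronglyMeasurable g volume)
    {C : ℝ} (hb : ∀ x, |g x| ≤ C) (z : ℝ) :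
    ∫ y in (0:ℝ)..z, (∫ x in (0:ℝ)..y, g x) = ∫ τ in (0:ℝ)..z, (z - τ) * g τ := by
  rcases le_or_gt 0 z with hz | hz
  · exact cauchy_nonneg hm hb hz
  · set w : ℝ := -z with hw
    have hw0 : 0 ≤ w := by simp [hw]; linarith
    set g' : ℝ → ℝ := fun x => g (-x) with hg'
    have hm' : AEStronglyMeasurable g' volume :=
      hm.comp_quasiMeasurePreserving (Measure.measurePreserving_neg volume).quasiMeasurePreserving
    have hb' : ∀ x, |g' x| ≤ C := fun x => hb (-x)
    have key := cauchy_nonneg hm' hb' hw0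
    have hGneg : ∀ y : ℝ, (∫ x in (0:ℝ)..(-y), g x) = -∫ x in (0:ℝ)..y, g' x := by
      intro y
      rw [hg']
      rw [intervalIntegral.integral_comp_neg (fun x => g x), neg_zero,
        intervalIntegral.integral_symm]
    have comp : ∀ F : ℝ → ℝ, ∫ x in (-w:ℝ)..(0:ℝ), F x = ∫ x in (0:ℝ)..w, F (-x) := by
      intro F
      rw [intervalIntegral.integral_comp_neg F, neg_zero]
    have hzw : z = -w := by rw [hw]; ring
    have lhs_eq : ∫ y in (0:ℝ)..z, (∫ x in (0:ℝ)..y, g x)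
        = ∫ y in (0:ℝ)..w, (∫ x in (0:ℝ)..y, g' x) := by
      rw [hzw, intervalIntegral.integral_symm, comp (fun y => ∫ x in (0:ℝ)..y, g x)]
      simp only [hGneg]
      rw [intervalIntegral.integral_neg, neg_neg]
    have rhs_eq : ∫ τ in (0:ℝ)..z, (z - τ) * g τ
        = ∫ τ in (0:ℝ)..w, (w - τ) * g' τ := by
      have e2 : ∀ τ : ℝ, (-w - (-τ)) * g (-τ) = -((w - τ) * g' τ) := by
        intro τ
        simp only [hg']
        ring
      rw [hzw, intervalIntegral.integral_symm, comp (fun τ => (-w - τ) * g τ)]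
      simp only [e2]
      rw [intervalIntegral.integral_neg, neg_neg]
    rw [lhs_eq, rhs_eq, key]

/-- Inner-product formula via a repeated integral: with `f_i = φ * 1_{[t_{i−1}, t_i)}` and
`f_j = φ * 1_{[t_{j−1}, t_j)}` for an integrable kernel `φ ∈ L¹ ∩ L²` with autocorrelation
`a_φ(t) = ∫ φ(s) φ(s−t) ds`, one has
`⟨f_i, f_j⟩ = h(t_i − t_{j−1}) − h(t_{i−1} − t_{j−1}) − h(t_i − t_j) + h(t_{i−1} − t_j)`
where `h(t) = ∫₀ᵗ (t − τ) a_φ(τ) dτ`. -/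
theorem inner_product_by_repeated_integral
    (φ : ℝ → ℝ) (hφ1 : Integrable φ) (hφ2 : MemLp φ 2 (volume : Measure ℝ))
    (ti1 ti tj1 tj : ℝ) (hi : ti1 < ti) (hj : tj1 < tj)
    (aφ : ℝ → ℝ) (haφ : ∀ t, aφ t = ∫ s, φ s * φ (s - t))
    (fi fj : ℝ → ℝ)
    (hfi : ∀ t, fi t = ∫ s in ti1..ti, φ (t - s))
    (hfj : ∀ t, fj t = ∫ s in tj1..tj, φ (t - s))
    (h : ℝ → ℝ) (hh : ∀ t, h t = ∫ τ in (0 : ℝ)..t, (t - τ) * aφ τ) :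
    ∫ t, fi t * fj t
      = h (ti - tj1) - h (ti1 - tj1) - h (ti - tj) + h (ti1 - tj) := by
  have φm : AEStronglyMeasurable φ volume := hφ1.1
  haveI hIfin : IsFiniteMeasure (volume.restrict (Set.Ioc ti1 ti)) := finres ti1 ti
  haveI hJfin : IsFiniteMeasure (volume.restrict (Set.Ioc tj1 tj)) := finres tj1 tj
  have hacI : (volume.restrict (Set.Ioc ti1 ti)) ≪ (volume : Measure ℝ) :=
    Measure.restrict_le_self.absolutelyContinuous
  have hacJ : (volume.restrict (Set.Ioc tj1 tj)) ≪ (volume : Measure ℝ) :=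
    Measure.restrict_le_self.absolutelyContinuous
  -- translations
  have φ_tr_mem : ∀ c : ℝ, MemLp (fun t => φ (t - c)) 2 (volume : Measure ℝ) := fun c =>
    hφ2.comp_measurePreserving (measurePreserving_sub_right volume c)
  have φ_tr_int : ∀ c : ℝ, Integrable (fun t => φ (t - c)) volume := fun c =>
    memLp_one_iff_integrable.mp
      ((memLp_one_iff_integrable.mpr hφ1).comp_measurePreserving
        (measurePreserving_sub_right volume c))
  have φ_trl_int : ∀ c : ℝ, Integrable (fun t => φ (c - t)) volume := by
    intro c
    have mps : MeasurePreserving (fun u : ℝ => c - u) volume volume := by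
      have : (fun u : ℝ => c - u) = (fun u : ℝ => c + u) ∘ (fun u : ℝ => -u) := by
        funext u; simp [sub_eq_add_neg]
      rw [this]
      exact (measurePreserving_add_left volume c).comp (Measure.measurePreserving_neg volume)
    exact memLp_one_iff_integrable.mp
      ((memLp_one_iff_integrable.mpr hφ1).comp_measurePreserving mps)
  have mulint : ∀ c d : ℝ, Integrable (fun t => φ (t - c) * φ (t - d)) volume := by
    intro c d
    have h121 : (1 : ENNReal)/1 = 1/2 + 1/2 := by
      rw [ENNReal.div_self one_ne_zero ENNReal.one_ne_top]
      exact (ENNReal.add_halves 1).symm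
    have := ((φ_tr_mem d).smul (φ_tr_mem c) (hpqr := ⟨by rw [inv_one]; exact ENNReal.inv_two_add_inv_two⟩) :
      MemLp ((fun t => φ (t - c)) • (fun t => φ (t - d))) 1 volume)
    exact memLp_one_iff_integrable.mp this
  -- Hölder bound
  set Cφ : ℝ := ∫ a, ‖φ a‖ ^ (2:ℝ) with hCφ
  have hCφ0 : 0 ≤ Cφ := integral_nonneg fun a => Real.rpow_nonneg (norm_nonneg _) _
  have hCb : ∀ c d : ℝ, (∫ t, ‖φ (t - c) * φ (t - d)‖) ≤ Cφ := by
    intro c d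
    have hconj : Real.HolderConjugate 2 2 := Real.holderConjugate_iff.mpr ⟨one_lt_two, by norm_num⟩
    have h2 : ENNReal.ofReal (2:ℝ) = 2 := by norm_num
    have m1 : MemLp (fun t => φ (t - c)) (ENNReal.ofReal 2) volume := by
      rw [h2]; exact φ_tr_mem c
    have m2 : MemLp (fun t => φ (t - d)) (ENNReal.ofReal 2) volume := by
      rw [h2]; exact φ_tr_mem d
    have key := integral_mul_norm_le_Lp_mul_Lq hconj m1 m2
    have t1 : (∫ t, ‖φ (t - c)‖ ^ (2:ℝ)) = Cφ :=
      integral_sub_right_eq_self (fun a => ‖φ a‖ ^ (2:ℝ)) c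
    have t2 : (∫ t, ‖φ (t - d)‖ ^ (2:ℝ)) = Cφ :=
      integral_sub_right_eq_self (fun a => ‖φ a‖ ^ (2:ℝ)) d
    calc ∫ t, ‖φ (t - c) * φ (t - d)‖ = ∫ t, ‖φ (t - c)‖ * ‖φ (t - d)‖ := by
          simp only [norm_mul]
      _ ≤ (∫ t, ‖φ (t - c)‖ ^ (2:ℝ)) ^ ((1:ℝ)/2) * (∫ t, ‖φ (t - d)‖ ^ (2:ℝ)) ^ ((1:ℝ)/2) := key
      _ = Cφ ^ ((1:ℝ)/2) * Cφ ^ ((1:ℝ)/2) := by rw [t1, t2]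
      _ = Cφ := by
          rw [← Real.rpow_add' hCφ0 (by norm_num : (1:ℝ)/2 + 1/2 ≠ 0)]
          norm_num
  have hprod : ∀ s u : ℝ, (∫ t, φ (t - s) * φ (t - u)) = aφ (u - s) := by
    intro s u
    calc ∫ t, φ (t - s) * φ (t - u)
        = ∫ t, (fun r => φ r * φ (r - (u - s))) (t - s) := by
          refine integral_congr_ae (Filter.Eventually.of_forall fun t => ?_)
          show φ (t - s) * φ (t - u) = φ (t - s) * φ (t - s - (u - s))
          congr 2
          ring
      _ = ∫ r, φ r * φ (r - (u - s)) := integral_sub_right_eq_self (fun r => φ r * φ (r - (u - s))) s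
      _ = aφ (u - s) := (haφ _).symm
  have haφ_le : ∀ v : ℝ, |aφ v| ≤ Cφ := by
    intro v
    rw [haφ]
    calc |∫ s, φ s * φ (s - v)| ≤ ∫ s, ‖φ s * φ (s - v)‖ := by
          rw [← Real.norm_eq_abs]
          exact norm_integral_le_integral_norm _
      _ = ∫ s, ‖φ (s - 0) * φ (s - v)‖ := by simp
      _ ≤ Cφ := hCb 0 v
  have aφ_meas : AEStronglyMeasurable aφ volume := by
    have a : AEStronglyMeasurable (fun p : ℝ × ℝ => φ p.2) ((volume : Measure ℝ).prod volume) :=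
      φm.comp_quasiMeasurePreserving Measure.quasiMeasurePreserving_snd
    have b : AEStronglyMeasurable (fun p : ℝ × ℝ => φ (p.2 - p.1))
        ((volume : Measure ℝ).prod volume) := by
      have := φm.comp_quasiMeasurePreserving
        ((quasiMeasurePreserving_sub volume volume).comp
          Measure.measurePreserving_swap.quasiMeasurePreserving)
      exact this
    have := (a.mul b).integral_prod_right'
    have heq : aφ = fun v => ∫ s, φ s * φ (s - v) := funext haφ
    rw [heq]
    exact this
  -- fi, fj
  have fi_eq : ∀ t, fi t = ∫ s in Set.Ioc ti1 ti, φ (t - s) := fun t => by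
    rw [hfi, intervalIntegral.integral_of_le hi.le]
  have fj_eq : ∀ t, fj t = ∫ s in Set.Ioc tj1 tj, φ (t - s) := fun t => by
    rw [hfj, intervalIntegral.integral_of_le hj.le]
  have fj_meas : AEStronglyMeasurable fj volume := by
    have h1 : AEStronglyMeasurable (fun p : ℝ × ℝ => φ (p.1 - p.2))
        ((volume : Measure ℝ).prod (volume.restrict (Set.Ioc tj1 tj))) :=
      (φm.comp_quasiMeasurePreserving (quasiMeasurePreserving_sub volume volume)).mono_ac
        (Measure.AbsolutelyContinuous.rfl.prod hacJ)
    have := h1.integral_prod_right'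
    have heq : fj = fun t => ∫ s in Set.Ioc tj1 tj, φ (t - s) := funext fj_eq
    rw [heq]
    exact this
  set Mφ : ℝ := ∫ s, ‖φ s‖ with hMφ
  have fj_bd : ∀ t, |fj t| ≤ Mφ := by
    intro t
    rw [fj_eq]
    calc |∫ u in Set.Ioc tj1 tj, φ (t - u)| ≤ ∫ u in Set.Ioc tj1 tj, ‖φ (t - u)‖ := by
          rw [← Real.norm_eq_abs]
          exact norm_integral_le_integral_norm _
      _ ≤ ∫ u, ‖φ (t - u)‖ :=
          setIntegral_le_integral (φ_trl_int t).norm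
            (Filter.Eventually.of_forall fun u => norm_nonneg _)
      _ = Mφ := integral_sub_left_eq_self (fun s => ‖φ s‖) volume t
  -- swap 1
  have swap1 : ∫ t, fi t * fj t
      = ∫ s in Set.Ioc ti1 ti, ∫ t, φ (t - s) * fj t := by
    have hUm : AEStronglyMeasurable (Function.uncurry fun t s => φ (t - s) * fj t)
        ((volume : Measure ℝ).prod (volume.restrict (Set.Ioc ti1 ti))) := by
      have a : AEStronglyMeasurable (fun p : ℝ × ℝ => φ (p.1 - p.2))
          ((volume : Measure ℝ).prod (volume.restrict (Set.Ioc ti1 ti))) :=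
        (φm.comp_quasiMeasurePreserving (quasiMeasurePreserving_sub volume volume)).mono_ac
          (Measure.AbsolutelyContinuous.rfl.prod hacI)
      have b : AEStronglyMeasurable (fun p : ℝ × ℝ => fj p.1)
          ((volume : Measure ℝ).prod (volume.restrict (Set.Ioc ti1 ti))) :=
        fj_meas.comp_quasiMeasurePreserving Measure.quasiMeasurePreserving_fst
      exact a.mul b
    have hint : Integrable (Function.uncurry fun t s => φ (t - s) * fj t)
        ((volume : Measure ℝ).prod (volume.restrict (Set.Ioc ti1 ti))) := by
      refine (integrable_prod_iff' hUm).mpr ⟨Filter.Eventually.of_forall fun s => ?_, ?_⟩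
      · have : Integrable (fun t => fj t * φ (t - s)) volume :=
          Integrable.bdd_mul (φ_tr_int s) fj_meas
            (Filter.Eventually.of_forall fun t => by
              rw [Real.norm_eq_abs]; exact fj_bd t)
        exact this.congr (Filter.Eventually.of_forall fun t => mul_comm _ _)
      · have hm2 : AEStronglyMeasurable (fun s => ∫ t, ‖φ (t - s) * fj t‖)
            (volume.restrict (Set.Ioc ti1 ti)) := by
          have a : AEStronglyMeasurable (fun p : ℝ × ℝ => φ (p.2 - p.1))
              ((volume.restrict (Set.Ioc ti1 ti)).prod (volume : Measure ℝ)) := by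
            have := φm.comp_quasiMeasurePreserving
              ((quasiMeasurePreserving_sub volume volume).comp
                Measure.measurePreserving_swap.quasiMeasurePreserving)
            exact (by exact this :
              AEStronglyMeasurable (fun p : ℝ × ℝ => φ (p.2 - p.1))
                ((volume : Measure ℝ).prod volume)).mono_ac
              (hacI.prod Measure.AbsolutelyContinuous.rfl)
          have b : AEStronglyMeasurable (fun p : ℝ × ℝ => fj p.2)
              ((volume.restrict (Set.Ioc ti1 ti)).prod (volume : Measure ℝ)) :=
            fj_meas.comp_quasiMeasurePreserving Measure.quasiMeasurePreserving_snd
          exact ((a.mul b).norm).integral_prod_right'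
        refine Integrable.mono' (integrable_const (Mφ * Mφ)) hm2
          (Filter.Eventually.of_forall fun s => ?_)
        rw [Real.norm_eq_abs, abs_of_nonneg (integral_nonneg fun t => norm_nonneg _)]
        calc ∫ t, ‖φ (t - s) * fj t‖ ≤ ∫ t, ‖φ (t - s)‖ * Mφ := by
              refine integral_mono_of_nonneg
                (Filter.Eventually.of_forall fun t => norm_nonneg _)
                ((φ_tr_int s).norm.mul_const Mφ)
                (Filter.Eventually.of_forall fun t => ?_)
              show ‖φ (t - s) * fj t‖ ≤ ‖φ (t - s)‖ * Mφ
              rw [norm_mul]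
              refine mul_le_mul_of_nonneg_left ?_ (norm_nonneg _)
              rw [Real.norm_eq_abs]
              exact fj_bd t
          _ = Mφ * Mφ := by
              rw [MeasureTheory.integral_mul_const, integral_sub_right_eq_self (fun a => ‖φ a‖) s]
    calc ∫ t, fi t * fj t = ∫ t, ∫ s in Set.Ioc ti1 ti, φ (t - s) * fj t := by
          refine integral_congr_ae (Filter.Eventually.of_forall fun t => ?_)
          show fi t * fj t = ∫ s in Set.Ioc ti1 ti, φ (t - s) * fj t
          rw [fi_eq t, ← MeasureTheory.integral_mul_const]
      _ = ∫ s in Set.Ioc ti1 ti, ∫ t, φ (t - s) * fj t := integral_integral_swap hint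
  -- swap 2
  have swap2 : ∀ s : ℝ, ∫ t, φ (t - s) * fj t = ∫ u in Set.Ioc tj1 tj, aφ (u - s) := by
    intro s
    have hUm : AEStronglyMeasurable (Function.uncurry fun t u => φ (t - s) * φ (t - u))
        ((volume : Measure ℝ).prod (volume.restrict (Set.Ioc tj1 tj))) := by
      have a : AEStronglyMeasurable (fun p : ℝ × ℝ => φ (p.1 - s))
          ((volume : Measure ℝ).prod (volume.restrict (Set.Ioc tj1 tj))) :=
        φm.comp_quasiMeasurePreserving
          ((measurePreserving_sub_right volume s).quasiMeasurePreserving.comp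
            Measure.quasiMeasurePreserving_fst)
      have b : AEStronglyMeasurable (fun p : ℝ × ℝ => φ (p.1 - p.2))
          ((volume : Measure ℝ).prod (volume.restrict (Set.Ioc tj1 tj))) :=
        (φm.comp_quasiMeasurePreserving (quasiMeasurePreserving_sub volume volume)).mono_ac
          (Measure.AbsolutelyContinuous.rfl.prod hacJ)
      exact a.mul b
    have hint : Integrable (Function.uncurry fun t u => φ (t - s) * φ (t - u))
        ((volume : Measure ℝ).prod (volume.restrict (Set.Ioc tj1 tj))) := by
      refine (integrable_prod_iff' hUm).mpr
        ⟨Filter.Eventually.of_forall fun u => mulint s u, ?_⟩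
      have hm2 : AEStronglyMeasurable (fun u => ∫ t, ‖φ (t - s) * φ (t - u)‖)
          (volume.restrict (Set.Ioc tj1 tj)) := by
        have a : AEStronglyMeasurable (fun p : ℝ × ℝ => φ (p.2 - s))
            ((volume.restrict (Set.Ioc tj1 tj)).prod (volume : Measure ℝ)) :=
          φm.comp_quasiMeasurePreserving
            ((measurePreserving_sub_right volume s).quasiMeasurePreserving.comp
              Measure.quasiMeasurePreserving_snd)
        have b : AEStronglyMeasurable (fun p : ℝ × ℝ => φ (p.2 - p.1))
            ((volume.restrict (Set.Ioc tj1 tj)).prod (volume : Measure ℝ)) := by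
          have := φm.comp_quasiMeasurePreserving
            ((quasiMeasurePreserving_sub volume volume).comp
              Measure.measurePreserving_swap.quasiMeasurePreserving)
          exact (by exact this :
            AEStronglyMeasurable (fun p : ℝ × ℝ => φ (p.2 - p.1))
              ((volume : Measure ℝ).prod volume)).mono_ac
            (hacJ.prod Measure.AbsolutelyContinuous.rfl)
        exact ((a.mul b).norm).integral_prod_right'
      refine Integrable.mono' (integrable_const Cφ) hm2
        (Filter.Eventually.of_forall fun u => ?_)
      rw [Real.norm_eq_abs, abs_of_nonneg (integral_nonneg fun t => norm_nonneg _)]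
      exact hCb s u
    calc ∫ t, φ (t - s) * fj t = ∫ t, ∫ u in Set.Ioc tj1 tj, φ (t - s) * φ (t - u) := by
          refine integral_congr_ae (Filter.Eventually.of_forall fun t => ?_)
          show φ (t - s) * fj t = ∫ u in Set.Ioc tj1 tj, φ (t - s) * φ (t - u)
          rw [fj_eq t, ← MeasureTheory.integral_const_mul]
      _ = ∫ u in Set.Ioc tj1 tj, ∫ t, φ (t - s) * φ (t - u) := integral_integral_swap hint
      _ = ∫ u in Set.Ioc tj1 tj, aφ (u - s) :=
          setIntegral_congr_fun measurableSet_Ioc fun u _ => hprod s u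
  -- step D
  have aφ_ii : ∀ a b : ℝ, IntervalIntegrable aφ volume a b :=
    bdd_intervalIntegrable aφ_meas haφ_le
  set G : ℝ → ℝ := fun y => ∫ x in (0:ℝ)..y, aφ x with hG
  have Gc : Continuous G := intervalIntegral.continuous_primitive aφ_ii 0
  have hzG : ∀ z : ℝ, ∫ y in (0:ℝ)..z, G y = h z := by
    intro z
    have := cauchy_all aφ_meas haφ_le z
    rw [hG]
    rw [this]
    exact (hh z).symm
  have inner_eq : ∀ s : ℝ, ∫ u in Set.Ioc tj1 tj, aφ (u - s) = G (tj - s) - G (tj1 - s) := by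
    intro s
    rw [← intervalIntegral.integral_of_le hj.le,
      intervalIntegral.integral_comp_sub_right (fun u => aφ u) s]
    exact (intervalIntegral.integral_interval_sub_left
      (aφ_ii 0 (tj - s)) (aφ_ii 0 (tj1 - s))).symm
  have evalG : ∀ c : ℝ, ∫ s in ti1..ti, G (c - s) = h (c - ti1) - h (c - ti) := by
    intro c
    rw [intervalIntegral.integral_comp_sub_left G c]
    have hGiv : ∀ a b : ℝ, IntervalIntegrable G volume a b := fun a b =>
      Gc.intervalIntegrable a b
    rw [← intervalIntegral.integral_interval_sub_left (hGiv 0 (c - ti1)) (hGiv 0 (c - ti)),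
      hzG, hzG]
  have outer : ∫ s in Set.Ioc ti1 ti, (G (tj - s) - G (tj1 - s))
      = (h (tj - ti1) - h (tj - ti)) - (h (tj1 - ti1) - h (tj1 - ti)) := by
    rw [← intervalIntegral.integral_of_le hi.le]
    have hGii : ∀ c : ℝ, IntervalIntegrable (fun s => G (c - s)) volume ti1 ti := fun c =>
      (Gc.comp (continuous_const.sub continuous_id)).intervalIntegrable _ _
    rw [intervalIntegral.integral_sub (hGii tj) (hGii tj1), evalG tj, evalG tj1]
  -- evenness
  have haφ_even : ∀ t : ℝ, aφ (-t) = aφ t := by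
    intro t
    rw [haφ, haφ]
    calc ∫ s, φ s * φ (s - -t) = ∫ s, φ s * φ (s + t) := by
          refine integral_congr_ae (Filter.Eventually.of_forall fun s => ?_)
          show φ s * φ (s - -t) = φ s * φ (s + t)
          rw [sub_neg_eq_add]
      _ = ∫ s, (fun r => φ (r - t) * φ r) (s + t) := by
          refine integral_congr_ae (Filter.Eventually.of_forall fun s => ?_)
          show φ s * φ (s + t) = φ (s + t - t) * φ (s + t)
          rw [add_sub_cancel_right]
      _ = ∫ s, φ (s - t) * φ s := integral_add_right_eq_self (fun r => φ (r - t) * φ r) t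
      _ = ∫ s, φ s * φ (s - t) := by
          refine integral_congr_ae (Filter.Eventually.of_forall fun s => ?_)
          show φ (s - t) * φ s = φ s * φ (s - t)
          ring
  have heven : ∀ t : ℝ, h (-t) = h t := by
    intro t
    have e1 : ∀ x : ℝ, (-t - (-x)) * aφ (-x) = -((t - x) * aφ x) := by
      intro x
      rw [haφ_even]
      ring
    calc h (-t) = ∫ τ in (0:ℝ)..(-t), (-t - τ) * aφ τ := hh _
      _ = -∫ τ in (-t)..(0:ℝ), (-t - τ) * aφ τ := intervalIntegral.integral_symm (-t) 0
      _ = -∫ x in (0:ℝ)..t, (-t - (-x)) * aφ (-x) := by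
          rw [intervalIntegral.integral_comp_neg (fun τ => (-t - τ) * aφ τ), neg_zero]
      _ = -∫ x in (0:ℝ)..t, -((t - x) * aφ x) := by simp only [e1]
      _ = ∫ x in (0:ℝ)..t, (t - x) * aφ x := by
          rw [intervalIntegral.integral_neg, neg_neg]
      _ = h t := (hh t).symm
  -- combine
  calc ∫ t, fi t * fj t = ∫ s in Set.Ioc ti1 ti, ∫ u in Set.Ioc tj1 tj, aφ (u - s) := by
        rw [swap1]
        exact setIntegral_congr_fun measurableSet_Ioc fun s _ => swap2 s
    _ = ∫ s in Set.Ioc ti1 ti, (G (tj - s) - G (tj1 - s)) :=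
        setIntegral_congr_fun measurableSet_Ioc fun s _ => inner_eq s
    _ = (h (tj - ti1) - h (tj - ti)) - (h (tj1 - ti1) - h (tj1 - ti)) := outer
    _ = h (ti - tj1) - h (ti1 - tj1) - h (ti - tj) + h (ti1 - tj) := by
        rw [show tj - ti1 = -(ti1 - tj) by ring, heven,
          show tj - ti = -(ti - tj) by ring, heven,
          show tj1 - ti1 = -(ti1 - tj1) by ring, heven,
          show tj1 - ti = -(ti - tj1) by ring, heven]
        ring
end

section
/- Asymptotics of h for the sinc kernel: if φ(t) = sinc(t) = sin(πt)/(πt) (so a_φ = φ), then h(t) := ∫₀ᵗ (t−τ) φ(τ) dτ satisfies h(t) = t/2 − 1/π² + O(1/t) as t → ∞. -/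
open MeasureTheory intervalIntegral Filter

/-- The normalized sinc function `sin(πt)/(πt)`. -/
noncomputable def sinc (t : ℝ) : ℝ :=
  if t = 0 then 1 else Real.sin (Real.pi * t) / (Real.pi * t)

section Aux
open Set

lemma integral_pow_exp (k : ℕ) {T : ℝ} (hT : 0 < T) :
    ∫ s in Ioi (0:ℝ), s ^ k * Real.exp (-(T * s)) = (Nat.factorial k : ℝ) / T ^ (k + 1) := by
  have h := Real.integral_rpow_mul_exp_neg_mul_Ioi (a := (k : ℝ) + 1) (by positivity) hT
  rw [show ((k : ℝ) + 1 - 1) = ((k : ℕ) : ℝ) by push_cast; ring] at h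
  simp_rw [Real.rpow_natCast] at h
  rw [h, Real.Gamma_nat_eq_factorial,
    show ((k : ℝ) + 1) = ((k + 1 : ℕ) : ℝ) by push_cast; ring, Real.rpow_natCast]
  rw [one_div, inv_pow, inv_mul_eq_div]

lemma integrableOn_pow_exp (k : ℕ) {T : ℝ} (hT : 0 < T) :
    IntegrableOn (fun s : ℝ => s ^ k * Real.exp (-(T * s))) (Ioi (0:ℝ)) := by
  apply integrable_of_isBigO_exp_neg (half_pos hT)
    (Continuous.continuousOn (by fun_prop))
  have htend : Tendsto (fun s : ℝ => s ^ k * Real.exp (-(T / 2 * s))) atTop (nhds 0) := by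
    have h1 : Tendsto (fun s : ℝ => T / 2 * s) atTop atTop :=
      Tendsto.const_mul_atTop (half_pos hT) tendsto_id
    have h2 := (Real.tendsto_pow_mul_exp_neg_atTop_nhds_zero k).comp h1
    have h3 := h2.const_mul ((2 / T) ^ k)
    rw [mul_zero] at h3
    refine h3.congr fun s => ?_
    simp only [Function.comp]
    rw [mul_pow, ← mul_assoc, ← mul_pow]
    field_simp
    have := hT.ne'
    rw [← mul_pow, show 2 / T * (T * s / 2) = s by field_simp]
  rw [Asymptotics.isBigO_iff]
  refine ⟨1, ?_⟩
  filter_upwards [htend.eventually (eventually_le_nhds (by norm_num : (0:ℝ) < 1)),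
    eventually_ge_atTop (0:ℝ)] with s hs hs0
  have : s ^ k * Real.exp (-(T * s)) = (s ^ k * Real.exp (-(T / 2 * s))) * Real.exp (-(T / 2 * s)) := by
    rw [mul_assoc, ← Real.exp_add]; ring_nf
  rw [Real.norm_eq_abs, Real.norm_eq_abs, this, abs_mul, one_mul,
    show -(T/2)*s = -(T/2*s) by ring]
  simp only [Real.abs_exp]
  have h4 : |s ^ k * Real.exp (-(T / 2 * s))| ≤ 1 := by
    rw [abs_of_nonneg (by positivity)]; exact hs
  nlinarith [Real.exp_pos (-(T / 2 * s)), abs_nonneg (s ^ k * Real.exp (-(T / 2 * s)))]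

lemma inner_ftc (s T : ℝ) :
    ∫ x in (0:ℝ)..T, Real.sin x * Real.exp (-(x * s))
      = (1 - Real.exp (-(T * s)) * (Real.cos T + s * Real.sin T)) / (1 + s ^ 2) := by
  have hs2 : (1 : ℝ) + s ^ 2 ≠ 0 := by positivity
  have key : ∀ x : ℝ, HasDerivAt
      (fun x => -(Real.exp (-(x * s)) * (Real.cos x + s * Real.sin x)) / (1 + s ^ 2))
      (Real.sin x * Real.exp (-(x * s))) x := by
    intro x
    have he : HasDerivAt (fun x : ℝ => Real.exp (-(x * s))) (-s * Real.exp (-(x * s))) x := by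
      have h1 : HasDerivAt (fun x : ℝ => -(x * s)) (-s) x := by
        simpa using ((hasDerivAt_id x).mul_const s).fun_neg
      simpa [mul_comm] using h1.exp
    have hc : HasDerivAt (fun x : ℝ => Real.cos x + s * Real.sin x)
        (-Real.sin x + s * Real.cos x) x :=
      (Real.hasDerivAt_cos x).add ((Real.hasDerivAt_sin x).const_mul s)
    have := ((he.fun_mul hc).fun_neg).div_const (1 + s ^ 2)
    refine this.congr_deriv ?_
    field_simp
    ring
  rw [intervalIntegral.integral_eq_sub_of_hasDerivAt (fun x _ => key x)
    (Continuous.intervalIntegrable (by fun_prop) 0 T)]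
  simp [Real.cos_zero, Real.sin_zero]
  field_simp
  ring

lemma abs_sinc_le (x : ℝ) : |sinc x| ≤ 1 := by
  unfold sinc
  split_ifs with hx
  · simp
  · have hpx : Real.pi * x ≠ 0 := mul_ne_zero Real.pi_ne_zero hx
    rw [abs_div, div_le_one (abs_pos.mpr hpx)]
    exact Real.abs_sin_le_abs

lemma measurable_sinc : Measurable sinc := by
  unfold sinc
  apply Measurable.ite (measurableSet_singleton 0) measurable_const
  fun_prop

lemma sinc_intervalIntegrable (a b : ℝ) : IntervalIntegrable sinc volume a b := by
  rw [intervalIntegrable_iff]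
  refine Integrable.mono' (g := fun _ => (1:ℝ)) ((integrableOn_const_iff).mpr (Or.inr measure_Ioc_lt_top))
    measurable_sinc.aestronglyMeasurable.restrict ?_
  exact Eventually.of_forall fun x => by simpa using abs_sinc_le x

noncomputable def sincx (x : ℝ) : ℝ := if x = 0 then 1 else Real.sin x / x

noncomputable def Etail (T : ℝ) : ℝ :=
  ∫ s in Ioi (0:ℝ), Real.exp (-(T * s)) * (Real.cos T + s * Real.sin T) / (1 + s ^ 2)

lemma exp0_int {T : ℝ} (hT : 0 < T) :
    IntegrableOn (fun s : ℝ => Real.exp (-(T * s))) (Ioi (0:ℝ)) := by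
  simpa using integrableOn_pow_exp 0 hT

lemma exp0_val {T : ℝ} (hT : 0 < T) :
    ∫ s in Ioi (0:ℝ), Real.exp (-(T * s)) = 1 / T := by
  simpa using integral_pow_exp 0 hT

lemma Etail_integrable {T : ℝ} (hT : 0 < T) :
    IntegrableOn (fun s : ℝ =>
      Real.exp (-(T * s)) * (Real.cos T + s * Real.sin T) / (1 + s ^ 2)) (Ioi (0:ℝ)) := by
  refine Integrable.mono' (g := fun s => 2 * Real.exp (-(T * s)))
    ((exp0_int hT).const_mul 2) (Continuous.aestronglyMeasurable (by
      apply Continuous.div (by fun_prop) (by fun_prop)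
      intro x; positivity)).restrict ?_
  filter_upwards [ae_restrict_mem measurableSet_Ioi] with s hs
  have hs0 : (0:ℝ) < s := hs
  have hb : |Real.cos T + s * Real.sin T| ≤ 1 + s := by
    calc |Real.cos T + s * Real.sin T| ≤ |Real.cos T| + |s| * |Real.sin T| := by
          rw [← abs_mul]; exact abs_add_le _ _
      _ ≤ 1 + s := by
          have := Real.abs_cos_le_one T
          have := Real.abs_sin_le_one T
          have := abs_of_pos hs0
          nlinarith [abs_nonneg (Real.sin T), abs_nonneg s]
  rw [Real.norm_eq_abs, abs_div, abs_mul, Real.abs_exp,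
    abs_of_pos (show (0:ℝ) < 1 + s ^ 2 by positivity), div_le_iff₀ (by positivity)]
  nlinarith [Real.exp_pos (-(T * s)), sq_nonneg (2*s - 1), sq_nonneg s,
    mul_le_mul_of_nonneg_left hb (Real.exp_pos (-(T * s))).le]

lemma key1 {T : ℝ} (hT : 0 < T) :
    ∫ x in (0:ℝ)..T, sincx x = Real.pi / 2 - Etail T := by
  rw [intervalIntegral.integral_of_le hT.le]
  have step1 : ∀ x ∈ Ioc (0:ℝ) T,
      sincx x = ∫ s in Ioi (0:ℝ), Real.sin x * Real.exp (-(x * s)) := by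
    intro x hx
    rw [MeasureTheory.integral_const_mul, exp0_val hx.1]
    unfold sincx
    rw [if_neg (ne_of_gt hx.1)]
    field_simp
  rw [setIntegral_congr_fun measurableSet_Ioc step1]
  have hmeas : AEStronglyMeasurable
      (Function.uncurry fun x s : ℝ => Real.sin x * Real.exp (-(x * s)))
      ((volume.restrict (Ioc (0:ℝ) T)).prod (volume.restrict (Ioi (0:ℝ)))) :=
    Continuous.aestronglyMeasurable (by fun_prop)
  have hint : Integrable (Function.uncurry fun x s : ℝ => Real.sin x * Real.exp (-(x * s)))
      ((volume.restrict (Ioc (0:ℝ) T)).prod (volume.restrict (Ioi (0:ℝ)))) := by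
    rw [integrable_prod_iff hmeas]
    constructor
    · filter_upwards [ae_restrict_mem measurableSet_Ioc] with x hx
      exact ((exp0_int hx.1).const_mul (Real.sin x))
    · refine Integrable.mono' (g := fun _ => (1:ℝ))
        ((integrableOn_const_iff).mpr (Or.inr measure_Ioc_lt_top))
        hmeas.norm.integral_prod_right' ?_
      filter_upwards [ae_restrict_mem measurableSet_Ioc] with x hx
      have hval : ∫ s in Ioi (0:ℝ), ‖Real.sin x * Real.exp (-(x * s))‖
          = |Real.sin x| * (1 / x) := by
        simp_rw [Real.norm_eq_abs, abs_mul, Real.abs_exp]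
        rw [MeasureTheory.integral_const_mul, exp0_val hx.1]
      simp only [Function.uncurry] at hval ⊢
      rw [Real.norm_eq_abs, hval, abs_of_nonneg (mul_nonneg (abs_nonneg _) (one_div_pos.mpr hx.1).le)]
      rw [mul_one_div, div_le_one hx.1]
      calc |Real.sin x| ≤ |x| := Real.abs_sin_le_abs
        _ = x := abs_of_pos hx.1
  rw [MeasureTheory.integral_integral_swap hint]
  have step2 : (fun s => ∫ x in Ioc (0:ℝ) T, Real.sin x * Real.exp (-(x * s)))
      = fun s => (1 + s ^ 2)⁻¹
          - Real.exp (-(T * s)) * (Real.cos T + s * Real.sin T) / (1 + s ^ 2) := by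
    funext s
    rw [← intervalIntegral.integral_of_le hT.le, inner_ftc]
    have : (1:ℝ) + s ^ 2 ≠ 0 := by positivity
    field_simp
  rw [step2, MeasureTheory.integral_sub integrable_inv_one_add_sq.integrableOn
    (Etail_integrable hT), integral_Ioi_inv_one_add_sq]
  simp [Etail]

lemma Ebound {T : ℝ} (hT : 1 ≤ T) : |Etail T - Real.cos T / T| ≤ 3 / T ^ 2 := by
  have hT0 : (0:ℝ) < T := lt_of_lt_of_le one_pos hT
  have h1 : IntegrableOn (fun s : ℝ => s * Real.exp (-(T * s))) (Ioi (0:ℝ)) := by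
    simpa using integrableOn_pow_exp 1 hT0
  have h2 : IntegrableOn (fun s : ℝ => s ^ 2 * Real.exp (-(T * s))) (Ioi (0:ℝ)) :=
    integrableOn_pow_exp 2 hT0
  have i1 : ∫ s in Ioi (0:ℝ), s * Real.exp (-(T * s)) = 1 / T ^ 2 := by
    have := integral_pow_exp 1 hT0; simpa using this
  have i2 : ∫ s in Ioi (0:ℝ), s ^ 2 * Real.exp (-(T * s)) = 2 / T ^ 3 := by
    have := integral_pow_exp 2 hT0
    norm_num [Nat.factorial] at this
    exact this
  have hcos : ∫ s in Ioi (0:ℝ), Real.cos T * Real.exp (-(T * s)) = Real.cos T / T := by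
    rw [MeasureTheory.integral_const_mul, exp0_val hT0, mul_one_div]
  have hdiff : Etail T - Real.cos T / T
      = ∫ s in Ioi (0:ℝ), (Real.exp (-(T * s)) * (Real.cos T + s * Real.sin T) / (1 + s ^ 2)
          - Real.cos T * Real.exp (-(T * s))) := by
    rw [MeasureTheory.integral_sub (Etail_integrable hT0) ((exp0_int hT0).const_mul _), hcos]
    rfl
  rw [← Real.norm_eq_abs, hdiff]
  have hbound : ‖∫ s in Ioi (0:ℝ), (Real.exp (-(T * s)) * (Real.cos T + s * Real.sin T) / (1 + s ^ 2)
      - Real.cos T * Real.exp (-(T * s)))‖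
      ≤ ∫ s in Ioi (0:ℝ), (s * Real.exp (-(T * s)) + s ^ 2 * Real.exp (-(T * s))) := by
    refine MeasureTheory.norm_integral_le_of_norm_le (h1.add h2) ?_
    filter_upwards [ae_restrict_mem measurableSet_Ioi] with s hs
    have hs0 : (0:ℝ) < s := hs
    have hkey : Real.exp (-(T * s)) * (Real.cos T + s * Real.sin T) / (1 + s ^ 2)
        - Real.cos T * Real.exp (-(T * s))
        = Real.exp (-(T * s)) * (s * Real.sin T - s ^ 2 * Real.cos T) / (1 + s ^ 2) := by
      have : (1:ℝ) + s ^ 2 ≠ 0 := by positivity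
      field_simp
      ring
    rw [hkey, Real.norm_eq_abs, abs_div, abs_mul, Real.abs_exp,
      abs_of_pos (show (0:ℝ) < 1 + s ^ 2 by positivity), div_le_iff₀ (by positivity)]
    have h5 : |s * Real.sin T - s ^ 2 * Real.cos T| ≤ s + s ^ 2 := by
      calc |s * Real.sin T - s ^ 2 * Real.cos T|
          ≤ |s| * |Real.sin T| + |s ^ 2| * |Real.cos T| := by
            rw [← abs_mul, ← abs_mul]; exact abs_sub _ _
        _ ≤ s + s ^ 2 := by
            have := Real.abs_sin_le_one T
            have := Real.abs_cos_le_one T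
            rw [abs_of_pos hs0, abs_of_pos (by positivity : (0:ℝ) < s ^ 2)]
            nlinarith [sq_nonneg s]
    nlinarith [Real.exp_pos (-(T * s)), sq_nonneg s,
      mul_le_mul_of_nonneg_left h5 (Real.exp_pos (-(T * s))).le,
      mul_nonneg (mul_nonneg (Real.exp_pos (-(T * s))).le (by positivity : (0:ℝ) ≤ s + s ^ 2))
        (sq_nonneg s)]
  refine hbound.trans ?_
  rw [MeasureTheory.integral_add h1 h2, i1, i2]
  rw [div_add_div _ _ (by positivity) (by positivity), div_le_div_iff₀ (by positivity) (by positivity)]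
  nlinarith [pow_pos hT0 2, pow_pos hT0 3, pow_pos hT0 5,
    mul_le_mul_of_nonneg_left hT (by positivity : (0:ℝ) ≤ T ^ 2 * T ^ 2)]

lemma F_eq (t : ℝ) : ∫ τ in (0:ℝ)..t, sinc τ
    = Real.pi⁻¹ * ∫ x in (0:ℝ)..(Real.pi * t), sincx x := by
  have hs : ∀ τ : ℝ, sinc τ = sincx (Real.pi * τ) := by
    intro τ
    unfold sinc sincx
    rcases eq_or_ne τ 0 with h | h
    · simp [h]
    · rw [if_neg h, if_neg (mul_ne_zero Real.pi_ne_zero h)]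
  simp_rw [hs]
  rw [intervalIntegral.integral_comp_mul_left (f := fun x => sincx x) Real.pi_ne_zero]
  simp

lemma h_formula (t : ℝ) : ∫ τ in (0:ℝ)..t, (t - τ) * sinc τ
    = t * (∫ τ in (0:ℝ)..t, sinc τ) - (1 - Real.cos (Real.pi * t)) / Real.pi ^ 2 := by
  have e1 : ∀ τ : ℝ, (t - τ) * sinc τ = t * sinc τ - Real.sin (Real.pi * τ) / Real.pi := by
    intro τ
    rcases eq_or_ne τ 0 with hτ | hτ
    · simp [hτ, sinc]
    · unfold sinc
      rw [if_neg hτ]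
      have hπτ : Real.pi * τ ≠ 0 := mul_ne_zero Real.pi_ne_zero hτ
      field_simp
  simp_rw [e1]
  rw [intervalIntegral.integral_sub ((sinc_intervalIntegrable 0 t).const_mul t)
    (Continuous.intervalIntegrable (by fun_prop) 0 t)]
  rw [intervalIntegral.integral_const_mul]
  congr 1
  rw [intervalIntegral.integral_div]
  rw [intervalIntegral.integral_comp_mul_left (f := Real.sin) Real.pi_ne_zero]
  rw [mul_zero, integral_sin, Real.cos_zero, smul_eq_mul]
  have := Real.pi_ne_zero
  field_simp


end Aux

open Set in
/-- Asymptotics of `h` for the sinc kernel: `h(t) = ∫₀ᵗ (t−τ) sinc(τ) dτ` satisfies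
`h(t) = t/2 − 1/π² + O(1/t)` as `t → ∞`. -/
theorem sinc_repeated_integral_asymptotics
    (h : ℝ → ℝ) (hh : ∀ t, h t = ∫ τ in (0 : ℝ)..t, (t - τ) * sinc τ) :
    (fun t : ℝ => h t - (t / 2 - 1 / Real.pi ^ 2)) =O[atTop] (fun t : ℝ => 1 / t) := by
  rw [Asymptotics.isBigO_iff]
  refine ⟨3, ?_⟩
  filter_upwards [eventually_ge_atTop (1:ℝ)] with t ht
  have ht0 : (0:ℝ) < t := lt_of_lt_of_le one_pos ht
  have hπ := Real.pi_pos
  have hπt : (0:ℝ) < Real.pi * t := by positivity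
  have hπt1 : (1:ℝ) ≤ Real.pi * t := by nlinarith [Real.pi_gt_three]
  have hF : ∫ τ in (0:ℝ)..t, sinc τ
      = Real.pi⁻¹ * (Real.pi / 2 - Etail (Real.pi * t)) := by
    rw [F_eq, key1 hπt]
  have hh' : h t = t * (Real.pi⁻¹ * (Real.pi / 2 - Etail (Real.pi * t)))
      - (1 - Real.cos (Real.pi * t)) / Real.pi ^ 2 := by
    rw [hh, h_formula, hF]
  have hδb : |Etail (Real.pi * t) - Real.cos (Real.pi * t) / (Real.pi * t)|
      ≤ 3 / (Real.pi * t) ^ 2 := Ebound hπt1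
  have hexpr : h t - (t / 2 - 1 / Real.pi ^ 2)
      = -(t / Real.pi) * (Etail (Real.pi * t) - Real.cos (Real.pi * t) / (Real.pi * t)) := by
    rw [hh']
    field_simp
    ring
  rw [hexpr, Real.norm_eq_abs, Real.norm_eq_abs, abs_mul, abs_neg, abs_div,
    abs_of_pos ht0, abs_of_pos hπ, abs_of_pos (one_div_pos.mpr ht0)]
  calc t / Real.pi * |Etail (Real.pi * t) - Real.cos (Real.pi * t) / (Real.pi * t)|
      ≤ t / Real.pi * (3 / (Real.pi * t) ^ 2) :=
        mul_le_mul_of_nonneg_left hδb (by positivity)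
    _ = 3 / (Real.pi ^ 3 * t) := by field_simp
    _ ≤ 3 * (1 / t) := by
        rw [mul_one_div]
        gcongr
        nlinarith [mul_le_mul_of_nonneg_right
          (show (1:ℝ) ≤ Real.pi ^ 3 by nlinarith [Real.pi_gt_three]) ht0.le]
end
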